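/- Let N ≥ 1 and let P1, P2, P4 be N×N complex matrices such that P1 is unitary (P1†·P1 = I_N), P2 ≠ P4, and (P4−P2)† · (P4−P2) = (‖P4−P2‖_F² / N) · I_N. Then the 2N×(3N−1) matrix G(P1,P2,P1,P4) has rank 2N (full row rank) if and only if w · P1 ≠ w, where w is the 1×N all-ones row vector. -/

import Mathlib

open Matrix

noncomputable section

/-- Squared Frobenius norm of a complex matrix. -/
def frobSq {m n : ℕ} (X : Matrix (Fin m) (Fin n) ℂ) : ℝ :=
  ∑ i, ∑ j, Complex.normSq (X i j)

/-- The 3N × (3N-1) bidiagonal matrix `Ā` of the paper (0-indexed):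
`-1` on the diagonal, `1` on the subdiagonal, zeros elsewhere. -/
def Abar (N : ℕ) : Matrix (Fin (3 * N)) (Fin (3 * N - 1)) ℂ :=
  Matrix.of fun i j =>
    if i.val = j.val then -1 else if i.val = j.val + 1 then 1 else 0

/-- 2N × 3N block matrix `[[A, B, C], [D, E, F]]` built out of N × N blocks. -/
def blk23 {N : ℕ} (A B C D E F : Matrix (Fin N) (Fin N) ℂ) :
    Matrix (Fin (2 * N)) (Fin (3 * N)) ℂ :=
  Matrix.of fun i j =>
    if hi : i.val < N then
      if hj : j.val < N then A ⟨i.val, hi⟩ ⟨j.val, hj⟩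
      else if hj2 : j.val < 2 * N then B ⟨i.val, hi⟩ ⟨j.val - N, by omega⟩
      else C ⟨i.val, hi⟩ ⟨j.val - 2 * N, by have := j.isLt; omega⟩
    else
      if hj : j.val < N then D ⟨i.val - N, by have := i.isLt; omega⟩ ⟨j.val, hj⟩
      else if hj2 : j.val < 2 * N then
        E ⟨i.val - N, by have := i.isLt; omega⟩ ⟨j.val - N, by omega⟩
      else F ⟨i.val - N, by have := i.isLt; omega⟩ ⟨j.val - 2 * N, by have := j.isLt; omega⟩

/-- 2N × 2N block matrix `[[A, B], [C, D]]` built out of N × N blocks. -/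
def blk22 {N : ℕ} (A B C D : Matrix (Fin N) (Fin N) ℂ) :
    Matrix (Fin (2 * N)) (Fin (2 * N)) ℂ :=
  Matrix.of fun i j =>
    if hi : i.val < N then
      if hj : j.val < N then A ⟨i.val, hi⟩ ⟨j.val, hj⟩
      else B ⟨i.val, hi⟩ ⟨j.val - N, by have := j.isLt; omega⟩
    else
      if hj : j.val < N then C ⟨i.val - N, by have := i.isLt; omega⟩ ⟨j.val, hj⟩
      else D ⟨i.val - N, by have := i.isLt; omega⟩ ⟨j.val - N, by have := j.isLt; omega⟩

/-- The 2N × (3N-1) matrix `G(P1, P2, P3, P4) = [[I, P1, P1·P2], [I, P3, P3·P4]] · Ā`. -/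
def Gmat {N : ℕ} (P1 P2 P3 P4 : Matrix (Fin N) (Fin N) ℂ) :
    Matrix (Fin (2 * N)) (Fin (3 * N - 1)) ℂ :=
  blk23 1 P1 (P1 * P2) 1 P3 (P3 * P4) * Abar N

/-- The 1 × N all-ones row vector `w`. -/
def wrow (N : ℕ) : Matrix (Fin 1) (Fin N) ℂ :=
  Matrix.of fun _ _ => 1

/-! ### Auxiliary lemmas -/

lemma rank_eq_iff_vecMul_inj {m n : ℕ} (A : Matrix (Fin m) (Fin n) ℂ) :
    A.rank = m ↔ ∀ v : Fin m → ℂ, A.vecMul v = 0 → v = 0 := by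
  rw [← Matrix.rank_transpose, Matrix.rank]
  have hrn := LinearMap.finrank_range_add_finrank_ker (Aᵀ.mulVecLin)
  rw [Module.finrank_fintype_fun_eq_card, Fintype.card_fin] at hrn
  have hkv : ∀ v : Fin m → ℂ, Aᵀ.mulVecLin v = A.vecMul v := by
    intro v; rw [Matrix.mulVecLin_apply, Matrix.mulVec_transpose]
  constructor
  · intro h v hv
    have hker : LinearMap.ker Aᵀ.mulVecLin = ⊥ := by
      have h0 : Module.finrank ℂ (LinearMap.ker Aᵀ.mulVecLin) = 0 := by omega
      exact Submodule.finrank_eq_zero.mp h0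
    have : v ∈ LinearMap.ker Aᵀ.mulVecLin := by
      rw [LinearMap.mem_ker, hkv]; exact hv
    rw [hker, Submodule.mem_bot] at this; exact this
  · intro h
    have hker : LinearMap.ker Aᵀ.mulVecLin = ⊥ := by
      rw [LinearMap.ker_eq_bot']
      intro v hv
      exact h v (by rw [← hkv]; exact hv)
    have : Module.finrank ℂ (LinearMap.ker Aᵀ.mulVecLin) = 0 := by
      rw [hker]; exact finrank_bot ℂ _
    omega

lemma abar_vecMul {N : ℕ} (u : Fin (3 * N) → ℂ) (j : Fin (3 * N - 1)) :
    (Abar N).vecMul u j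
      = u ⟨j.val + 1, by omega⟩ - u ⟨j.val, by omega⟩ := by
  have hb1 : j.val + 1 < 3 * N := by omega
  have hb0 : j.val < 3 * N := by omega
  have hA : ∀ i : Fin (3 * N), Abar N i j
      = (if i = ⟨j.val + 1, hb1⟩ then 1 else 0) - (if i = ⟨j.val, hb0⟩ then 1 else 0) := by
    intro i
    simp only [Abar, Matrix.of_apply, Fin.ext_iff]
    by_cases h0 : i.val = j.val
    · simp [h0]
    · by_cases h1 : i.val = j.val + 1 <;> simp [h0, h1]
  simp only [Matrix.vecMul, dotProduct, hA, mul_sub, Finset.sum_sub_distrib,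
    mul_ite, mul_one, mul_zero]
  rw [Finset.sum_ite_eq' Finset.univ (⟨j.val + 1, hb1⟩ : Fin (3 * N)) u,
    Finset.sum_ite_eq' Finset.univ (⟨j.val, hb0⟩ : Fin (3 * N)) u]
  simp

/-- `u ᵥ* Abar = 0` iff `u` is constant. -/
lemma abar_vecMul_eq_zero_iff {N : ℕ} (hN : 1 ≤ N) (u : Fin (3 * N) → ℂ) :
    (Abar N).vecMul u = 0 ↔ ∀ i : Fin (3 * N), u i = u ⟨0, by omega⟩ := by
  constructor
  · intro h i
    obtain ⟨k, hk⟩ := i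
    induction k with
    | zero => rfl
    | succ k ih =>
      have hk' : k < 3 * N - 1 := by omega
      have h0 := congrFun h ⟨k, hk'⟩
      rw [abar_vecMul] at h0
      simp only [Pi.zero_apply] at h0
      have h2 : u ⟨k + 1, hk⟩ = u ⟨k, by omega⟩ := sub_eq_zero.mp h0
      rw [h2]; exact ih (by omega)
  · intro h
    funext j
    rw [abar_vecMul, h ⟨j.val + 1, by omega⟩, h ⟨j.val, by omega⟩]
    simp

lemma sum_split {N : ℕ} (f : Fin (2 * N) → ℂ) :
    ∑ i, f i = (∑ i : Fin N, f ⟨i.val, by omega⟩) + ∑ i : Fin N, f ⟨N + i.val, by omega⟩ := by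
  have h : N + N = 2 * N := by omega
  rw [← Fintype.sum_equiv (finCongr h) (fun i => f (finCongr h i)) f (fun _ => rfl),
    Fin.sum_univ_add]
  rfl

section blkentries
variable {N : ℕ} (A B C D E F : Matrix (Fin N) (Fin N) ℂ)

lemma blk23_11 (i j : Fin N) (h : i.val < 2*N) (h' : j.val < 3*N) :
    blk23 A B C D E F ⟨i.val, h⟩ ⟨j.val, h'⟩ = A i j := by
  simp [blk23, i.isLt, j.isLt]
lemma blk23_12 (i j : Fin N) (h : i.val < 2*N) (h' : N + j.val < 3*N) :
    blk23 A B C D E F ⟨i.val, h⟩ ⟨N + j.val, h'⟩ = B i j := by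
  have h1 : ¬ (N + j.val < N) := by omega
  have h2 : N + j.val < 2 * N := by have := j.isLt; omega
  simp [blk23, i.isLt, h1, h2]
lemma blk23_13 (i j : Fin N) (h : i.val < 2*N) (h' : 2*N + j.val < 3*N) :
    blk23 A B C D E F ⟨i.val, h⟩ ⟨2*N + j.val, h'⟩ = C i j := by
  have h1 : ¬ (2*N + j.val < N) := by have := j.isLt; omega
  have h2 : ¬ (2*N + j.val < 2 * N) := by omega
  simp [blk23, i.isLt, h1, h2]
lemma blk23_21 (i j : Fin N) (h : N + i.val < 2*N) (h' : j.val < 3*N) :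
    blk23 A B C D E F ⟨N + i.val, h⟩ ⟨j.val, h'⟩ = D i j := by
  have h1 : ¬ (N + i.val < N) := by omega
  simp [blk23, h1, j.isLt]
lemma blk23_22 (i j : Fin N) (h : N + i.val < 2*N) (h' : N + j.val < 3*N) :
    blk23 A B C D E F ⟨N + i.val, h⟩ ⟨N + j.val, h'⟩ = E i j := by
  have h1 : ¬ (N + i.val < N) := by omega
  have h2 : N + j.val < 2 * N := by have := j.isLt; omega
  simp [blk23, h1, h2]
lemma blk23_23 (i j : Fin N) (h : N + i.val < 2*N) (h' : 2*N + j.val < 3*N) :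
    blk23 A B C D E F ⟨N + i.val, h⟩ ⟨2*N + j.val, h'⟩ = F i j := by
  have h1 : ¬ (2*N + j.val < N) := by have := j.isLt; omega
  have h2 : ¬ (2*N + j.val < 2 * N) := by omega
  have h3 : ¬ (N + i.val < N) := by omega
  simp [blk23, h1, h2, h3]

lemma blk23_vecMul_lo (v : Fin (2 * N) → ℂ) (k : Fin N) (h : k.val < 3 * N) :
    (blk23 A B C D E F).vecMul v ⟨k.val, h⟩
      = A.vecMul (fun i : Fin N => v ⟨i.val, by omega⟩) k
        + D.vecMul (fun i : Fin N => v ⟨N + i.val, by omega⟩) k := by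
  show (∑ i, v i * blk23 A B C D E F i ⟨k.val, h⟩) = _
  rw [sum_split (fun i => v i * blk23 A B C D E F i ⟨k.val, h⟩)]
  congr 1
  · exact Finset.sum_congr rfl fun i _ => by rw [blk23_11]
  · exact Finset.sum_congr rfl fun i _ => by rw [blk23_21]

lemma blk23_vecMul_mid (v : Fin (2 * N) → ℂ) (k : Fin N) (h : N + k.val < 3 * N) :
    (blk23 A B C D E F).vecMul v ⟨N + k.val, h⟩
      = B.vecMul (fun i : Fin N => v ⟨i.val, by omega⟩) k
        + E.vecMul (fun i : Fin N => v ⟨N + i.val, by omega⟩) k := by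
  show (∑ i, v i * blk23 A B C D E F i ⟨N + k.val, h⟩) = _
  rw [sum_split (fun i => v i * blk23 A B C D E F i ⟨N + k.val, h⟩)]
  congr 1
  · exact Finset.sum_congr rfl fun i _ => by rw [blk23_12]
  · exact Finset.sum_congr rfl fun i _ => by rw [blk23_22]

lemma blk23_vecMul_hi (v : Fin (2 * N) → ℂ) (k : Fin N) (h : 2 * N + k.val < 3 * N) :
    (blk23 A B C D E F).vecMul v ⟨2 * N + k.val, h⟩
      = C.vecMul (fun i : Fin N => v ⟨i.val, by omega⟩) k
        + F.vecMul (fun i : Fin N => v ⟨N + i.val, by omega⟩) k := by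
  show (∑ i, v i * blk23 A B C D E F i ⟨2 * N + k.val, h⟩) = _
  rw [sum_split (fun i => v i * blk23 A B C D E F i ⟨2 * N + k.val, h⟩)]
  congr 1
  · exact Finset.sum_congr rfl fun i _ => by rw [blk23_13]
  · exact Finset.sum_congr rfl fun i _ => by rw [blk23_23]

end blkentries

lemma isUnit_of_conjTranspose_mul {N : ℕ} (P : Matrix (Fin N) (Fin N) ℂ)
    (h : Pᴴ * P = 1) : IsUnit P := by
  have h2 : P * Pᴴ = 1 := mul_eq_one_comm.mp h
  exact ⟨⟨P, Pᴴ, h2, h⟩, rfl⟩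

lemma vecMul_eq_zero_of_isUnit {N : ℕ} {P : Matrix (Fin N) (Fin N) ℂ}
    (h : IsUnit P) {b : Fin N → ℂ} (hb : b ᵥ* P = 0) : b = 0 := by
  have hinj := Matrix.vecMul_injective_iff_isUnit.mpr h
  have : b ᵥ* P = (0 : Fin N → ℂ) ᵥ* P := by simp [hb]
  exact hinj this

lemma frobSq_pos_of_ne_zero {m n : ℕ} {X : Matrix (Fin m) (Fin n) ℂ} (h : X ≠ 0) :
    0 < frobSq X := by
  have hnn : (0:ℝ) ≤ frobSq X :=
    Finset.sum_nonneg fun i _ => Finset.sum_nonneg fun j _ => Complex.normSq_nonneg _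
  rcases lt_or_eq_of_le hnn with h' | h'
  · exact h'
  exfalso
  apply h
  ext i j
  have hz : ∀ i ∈ Finset.univ, (∑ j, Complex.normSq (X i j)) = 0 := by
    refine (Finset.sum_eq_zero_iff_of_nonneg
      (fun i _ => Finset.sum_nonneg fun j _ => Complex.normSq_nonneg _)).mp ?_
    exact h'.symm
  have hz2 : ∀ j ∈ Finset.univ, Complex.normSq (X i j) = 0 := by
    rw [← Finset.sum_eq_zero_iff_of_nonneg (fun j _ => Complex.normSq_nonneg _)]
    exact hz i (Finset.mem_univ i)
  have := hz2 j (Finset.mem_univ j)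
  simpa [Complex.normSq_eq_zero] using this

/-! ### Main theorem -/

theorem stmt7 (N : ℕ) (hN : 1 ≤ N) (P1 P2 P4 : Matrix (Fin N) (Fin N) ℂ)
    (hP1 : P1ᴴ * P1 = 1) (hne : P2 ≠ P4)
    (hcond : (P4 - P2)ᴴ * (P4 - P2) = ((frobSq (P4 - P2) / (N : ℝ) : ℝ) : ℂ) • 1) :
    (Gmat P1 P2 P1 P4).rank = 2 * N ↔ wrow N * P1 ≠ wrow N := by
  set X : Matrix (Fin N) (Fin N) ℂ := P4 - P2 with hX
  -- the all-ones vector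
  set w0 : Fin N → ℂ := fun _ => 1 with hw0
  -- X is invertible
  have hXne : X ≠ 0 := fun h => hne (by rw [sub_eq_zero] at h; exact h.symm)
  have hfpos : (0:ℝ) < frobSq X := frobSq_pos_of_ne_zero hXne
  have hlam : ((frobSq X / (N : ℝ) : ℝ) : ℂ) ≠ 0 := by
    have : frobSq X / (N:ℝ) ≠ 0 := by
      have hN0 : (0:ℝ) < (N:ℝ) := by exact_mod_cast hN
      exact div_ne_zero (ne_of_gt hfpos) (ne_of_gt hN0)
    exact_mod_cast Complex.ofReal_ne_zero.mpr this
  have hXunit : IsUnit X := by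
    have h1 : (((frobSq X / (N : ℝ) : ℝ) : ℂ)⁻¹ • Xᴴ) * X = 1 := by
      rw [Matrix.smul_mul, hcond, smul_smul, inv_mul_cancel₀ hlam, one_smul]
    have h2 : X * (((frobSq X / (N : ℝ) : ℝ) : ℂ)⁻¹ • Xᴴ) = 1 :=
      mul_eq_one_comm.mp h1
    exact ⟨⟨X, _, h2, h1⟩, rfl⟩
  have hP1unit : IsUnit P1 := isUnit_of_conjTranspose_mul P1 hP1
  have hPXunit : IsUnit (P1 * X) := hP1unit.mul hXunit
  -- wrow condition as functions
  have hwrow : (wrow N * P1 ≠ wrow N) ↔ P1.vecMul w0 ≠ w0 := by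
    constructor
    · intro h h'
      apply h
      ext i j
      have := congrFun h' j
      simpa [wrow, Matrix.mul_apply, Matrix.vecMul, dotProduct, hw0] using this
    · intro h h'
      apply h
      funext j
      have : (wrow N * P1) 0 j = wrow N 0 j := by rw [h']
      simpa [wrow, Matrix.mul_apply, Matrix.vecMul, dotProduct, hw0] using this
  rw [hwrow, rank_eq_iff_vecMul_inj]
  -- characterize kernel vectors
  have hker : ∀ v : Fin (2*N) → ℂ, (Gmat P1 P2 P1 P4).vecMul v = 0 ↔
      ∃ c : ℂ, (∀ k : Fin N, v ⟨k.val, by omega⟩ + v ⟨N + k.val, by omega⟩ = c)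
        ∧ (∀ k : Fin N, P1.vecMul (fun i : Fin N => v ⟨i.val, by omega⟩ + v ⟨N + i.val, by omega⟩) k = c)
        ∧ (∀ k : Fin N, (P1*P2).vecMul (fun i : Fin N => v ⟨i.val, by omega⟩) k
            + (P1*P4).vecMul (fun i : Fin N => v ⟨N + i.val, by omega⟩) k = c) := by
    intro v
    set a : Fin N → ℂ := fun i => v ⟨i.val, by omega⟩ with ha
    set b : Fin N → ℂ := fun i => v ⟨N + i.val, by omega⟩ with hb
    set M := blk23 1 P1 (P1*P2) 1 P1 (P1*P4) with hM
    have hGv : (Gmat P1 P2 P1 P4).vecMul v = (Abar N).vecMul (M.vecMul v) := by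
      rw [Gmat, ← Matrix.vecMul_vecMul]
    rw [hGv, abar_vecMul_eq_zero_iff hN]
    set u := M.vecMul v with hu
    -- values of u in the three regimes
    have hulo : ∀ k : Fin N, ∀ h : k.val < 3*N, u ⟨k.val, h⟩ = a k + b k := by
      intro k h
      rw [hu, hM, blk23_vecMul_lo]
      simp [Matrix.vecMul_one, ha, hb]
    have humid : ∀ k : Fin N, ∀ h : N + k.val < 3*N,
        u ⟨N + k.val, h⟩ = P1.vecMul (fun i => a i + b i) k := by
      intro k h
      rw [hu, hM, blk23_vecMul_mid, ← ha, ← hb]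
      rw [show (fun i => a i + b i) = a + b from rfl, Matrix.add_vecMul]
      rfl
    have huhi : ∀ k : Fin N, ∀ h : 2*N + k.val < 3*N,
        u ⟨2*N + k.val, h⟩ = (P1*P2).vecMul a k + (P1*P4).vecMul b k := by
      intro k h
      rw [hu, hM, blk23_vecMul_hi, ← ha, ← hb]
    constructor
    · intro h
      refine ⟨u ⟨0, by omega⟩, fun k => ?_, fun k => ?_, fun k => ?_⟩
      · rw [← hulo k (by omega)]; exact h _
      · have := humid k (by omega)
        rw [← this]; exact h _
      · have := huhi k (by omega)
        rw [← this]; exact h _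
    · rintro ⟨c, h1, h2, h3⟩ i
      have hval : ∀ j : Fin (3*N), u j = c := by
        intro j
        rcases lt_or_ge j.val N with hj | hj
        · have : j = ⟨(⟨j.val, hj⟩ : Fin N).val, by omega⟩ := Fin.ext rfl
          rw [this, hulo ⟨j.val, hj⟩]; exact h1 _
        · rcases lt_or_ge j.val (2*N) with hj2 | hj2
          · have : j = ⟨N + (⟨j.val - N, by omega⟩ : Fin N).val, by omega⟩ :=
              Fin.ext (by simp; omega)
            rw [this, humid]; exact h2 _
          · have : j = ⟨2*N + (⟨j.val - 2*N, by omega⟩ : Fin N).val, by omega⟩ :=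
              Fin.ext (by simp; omega)
            rw [this, huhi]; exact h3 _
      rw [hval i, hval ⟨0, by omega⟩]
  constructor
  · -- full rank → w P1 ≠ w  (contrapositive)
    intro hrank hw
    -- build a nonzero kernel vector
    set b : Fin N → ℂ := (P1 * X)⁻¹.vecMul (w0 - P2.vecMul w0) with hbdef
    set a : Fin N → ℂ := w0 - b with hadef
    set v : Fin (2*N) → ℂ := fun i =>
      if h : i.val < N then a ⟨i.val, h⟩ else b ⟨i.val - N, by have := i.isLt; omega⟩ with hvdef
    have hva : ∀ k : Fin N, v ⟨k.val, by omega⟩ = a k := by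
      intro k; simp [hvdef, k.isLt]
    have hvb : ∀ k : Fin N, v ⟨N + k.val, by omega⟩ = b k := by
      intro k
      have h1 : ¬ (N + k.val < N) := by omega
      simp [hvdef, h1]
    have hbX : (P1 * X).vecMul b = w0 - P2.vecMul w0 := by
      rw [hbdef, Matrix.vecMul_vecMul,
        Matrix.nonsing_inv_mul _ ((Matrix.isUnit_iff_isUnit_det _).mp hPXunit), Matrix.vecMul_one]
    have hab : ∀ k, a k + b k = w0 k := by
      intro k; rw [hadef]; simp
    have hkerv : (Gmat P1 P2 P1 P4).vecMul v = 0 := by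
      rw [hker v]
      refine ⟨1, fun k => ?_, fun k => ?_, fun k => ?_⟩
      · rw [hva, hvb, hab]
      · have : (fun i : Fin N => v ⟨i.val, by omega⟩ + v ⟨N + i.val, by omega⟩) = w0 := by
          funext i; rw [hva, hvb, hab]
        rw [this, hw]
      · have hsplit : (fun i : Fin N => v ⟨i.val, by omega⟩) = a := funext hva
        have hsplit2 : (fun i : Fin N => v ⟨N + i.val, by omega⟩) = b := funext hvb
        rw [hsplit, hsplit2]
        have hPX : P1 * X = P1 * P4 - P1 * P2 := by rw [hX, Matrix.mul_sub]
        have key : (P1*P2).vecMul a + (P1*P4).vecMul b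
            = (P1*P2).vecMul (a + b) + (P1*X).vecMul b := by
          rw [Matrix.add_vecMul, hPX, Matrix.vecMul_sub]
          abel
        have habw : a + b = w0 := funext hab
        have hP1w : P1.vecMul w0 = w0 := hw
        have : ((P1*P2).vecMul a + (P1*P4).vecMul b) = w0 := by
          rw [key, habw, hbX, ← Matrix.vecMul_vecMul, hP1w]
          simp
        exact congrFun this k
    have hvne : v ≠ 0 := by
      intro h0
      have ha0 : ∀ k, a k + b k = 1 := fun k => hab k
      have k0 : Fin N := ⟨0, by omega⟩
      have : a k0 + b k0 = 0 := by
        rw [← hva k0, ← hvb k0, h0]; simp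
      rw [ha0 k0] at this
      exact one_ne_zero this
    exact hvne (hrank v hkerv)
  · -- w P1 ≠ w → full rank
    intro hw v hv
    rw [hker v] at hv
    obtain ⟨c, h1, h2, h3⟩ := hv
    set a : Fin N → ℂ := fun i => v ⟨i.val, by omega⟩ with ha
    set b : Fin N → ℂ := fun i => v ⟨N + i.val, by omega⟩ with hb
    -- c must be 0
    have hc : c = 0 := by
      by_contra hc0
      apply hw
      have hsum : (fun i : Fin N => v ⟨i.val, by omega⟩ + v ⟨N + i.val, by omega⟩)
          = c • w0 := by
        funext i; simpa [hw0] using h1 i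
      have h2f : (c • w0) ᵥ* P1 = c • w0 := by
        funext k
        have h2k := h2 k
        rw [hsum] at h2k
        simpa [hw0] using h2k
      rw [Matrix.smul_vecMul] at h2f
      exact smul_right_injective (Fin N → ℂ) hc0 h2f
    -- now a + b = 0 and b ᵥ* (P1 X) = 0
    have hab : ∀ k, a k + b k = 0 := by intro k; rw [← hc]; exact h1 k
    have haeq : a = -b := funext fun k => eq_neg_of_add_eq_zero_left (hab k)
    have hbzero : b = 0 := by
      apply vecMul_eq_zero_of_isUnit hPXunit
      have h3' : ∀ k, ((P1*P2).vecMul a + (P1*P4).vecMul b) k = 0 := by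
        intro k; rw [← hc]; exact h3 k
      have hPX : P1 * X = P1 * P4 - P1 * P2 := by rw [hX, Matrix.mul_sub]
      have : (P1*P2).vecMul a + (P1*P4).vecMul b = (P1*X).vecMul b := by
        rw [haeq, Matrix.neg_vecMul, hPX, Matrix.vecMul_sub]
        abel
      rw [← this]
      exact funext h3'
    have hazero : a = 0 := by rw [haeq, hbzero]; simp
    funext i
    rcases lt_or_ge i.val N with hi | hi
    · have hvi : v i = a ⟨i.val, hi⟩ := rfl
      rw [hvi, hazero]; rfl
    · have hvi : v i = b ⟨i.val - N, by have := i.isLt; omega⟩ :=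
        congrArg v (Fin.ext (show i.val = N + (i.val - N) by omega))
      rw [hvi, hbzero]; rfl
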